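/- In an Euler tour of a rooted ordered tree encoded as a successor function on the 2(n-1) directed edge-visits (as in the parallel construction: the successor of a downward edge into a leaf is the corresponding upward edge; the successor of a downward edge into an internal vertex is the first downward edge to its first child; the successor of an upward edge is the next sibling edge or the upward edge to the grandparent), the successor function defines a single cycle through all 2(n-1) edge-visits. -/

import Mathlib

open Finset

/-- The element following `v` in the list `l` (the next sibling), if any. -/
def nextAfter {V : Type*} [DecidableEq V] (l : List V) (v : V) : Option V :=
  ((l.dropWhile (fun x => x ≠ v)).drop 1).head?

/-- The successor function on directed edge-visits of a rooted ordered tree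
(given by its root `r`, parent pointers and ordered child lists), as in the
parallel Euler tour construction.  An edge-visit is a pair `(v, b)` with
`v ≠ r`: `(v, false)` is the downward traversal of the edge into `v`, and
`(v, true)` the upward traversal from `v` back to its parent.
The successor of a downward edge into a leaf is the corresponding upward edge;
the successor of a downward edge into an internal vertex is the downward edge
to its first child; the successor of an upward edge is the downward edge to
the next sibling, or the upward edge to the grandparent, or (for the last
edge of the tour) the first downward edge out of the root. -/
def eulerSucc {V : Type*} [DecidableEq V] (r : V) (parent : V → V)
    (childSeq : V → List V) : V × Bool → V × Bool
  | (v, false) =>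
      match childSeq v with
      | [] => (v, true)
      | c :: _ => (c, false)
  | (v, true) =>
      match nextAfter (childSeq (parent v)) v with
      | some w => (w, false)
      | none =>
          if parent v = r then
            match childSeq r with
            | c :: _ => (c, false)
            | [] => (v, true)
          else (parent v, true)

lemma nextAfter_eq {V : Type*} [DecidableEq V] (l1 rest : List V) (c : V) (hc : c ∉ l1) :
    nextAfter (l1 ++ c :: rest) c = rest.head? := by
  unfold nextAfter
  have h : (l1 ++ c :: rest).dropWhile (fun x => x ≠ c) = c :: rest := by
    induction l1 with
    | nil => simp [List.dropWhile]
    | cons a t ih =>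
        simp only [List.mem_cons, not_or] at hc
        rw [List.cons_append, List.dropWhile_cons]
        have : (a ≠ c : Bool) = true := by simp [Ne.symm hc.1]
        simp only [ne_eq, this, if_true]
        simpa using ih hc.2
  rw [h]
  simp

lemma nextAfter_mem {V : Type*} [DecidableEq V] {l : List V} {v w : V}
    (h : nextAfter l v = some w) : w ∈ l := by
  unfold nextAfter at h
  have hw : w ∈ (l.dropWhile (fun x => x ≠ v)).drop 1 := List.mem_of_mem_head? (by rw [h]; simp)
  exact (l.dropWhile_sublist _).subset (List.drop_subset _ _ hw)

lemma cycle_of_list {α : Type*} (f : α → α) (T : List α)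
    (hchain : List.Chain' (fun a b => f a = b) T)
    (hwrap : ∀ x ∈ T.getLast?, ∀ y ∈ T.head?, f x = y) :
    ∀ a ∈ T, ∀ b ∈ T, ∃ k, f^[k] a = b := by
  intro a ha b hb
  have hne : T ≠ [] := List.ne_nil_of_mem ha
  have hlen : 0 < T.length := List.length_pos_iff.mpr hne
  have hstep : ∀ i (h : i < T.length),
      f (T.get ⟨i, h⟩) = T.get ⟨(i+1) % T.length, Nat.mod_lt _ hlen⟩ := by
    intro i h
    rcases Nat.lt_or_ge (i+1) T.length with h1 | h1
    · have := List.isChain_iff_getElem.mp hchain i (by omega)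
      have hmod : (i+1) % T.length = i + 1 := Nat.mod_eq_of_lt h1
      simp_rw [hmod]
      exact this
    · have hi : i = T.length - 1 := by omega
      have hmod : (i+1) % T.length = 0 := by
        have : i + 1 = T.length := by omega
        simp [this]
      have hlast : T.getLast? = some (T.get ⟨i, h⟩) := by
        rw [List.getLast?_eq_getLast hne, List.getLast_eq_getElem]
        simp_rw [hi]
        rfl
      have hhead : T.head? = some (T.get ⟨(i+1) % T.length, Nat.mod_lt _ hlen⟩) := by
        rw [List.head?_eq_head hne]
        simp_rw [hmod]
        congr 1
        exact (List.get_mk_zero hlen).symm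
      exact hwrap _ hlast _ hhead
  have hiter : ∀ k i (h : i < T.length),
      f^[k] (T.get ⟨i, h⟩) = T.get ⟨(i+k) % T.length, Nat.mod_lt _ hlen⟩ := by
    intro k
    induction k with
    | zero => intro i h; simp [Nat.mod_eq_of_lt h]
    | succ k ih =>
        intro i h
        rw [Function.iterate_succ_apply, hstep i h, ih]
        congr 1
        apply Fin.ext
        show ((i + 1) % T.length + k) % T.length = (i + (k + 1)) % T.length
        have h2 : (i+1) % T.length + k ≡ (i+1) + k [MOD T.length] :=
          (Nat.mod_modEq (i+1) T.length).add_right k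
        have h3 : (i+1) + k = i + (k+1) := by omega
        rw [← h3]
        exact h2
  obtain ⟨⟨i, hi⟩, ha'⟩ := List.get_of_mem ha
  obtain ⟨⟨j, hj⟩, hb'⟩ := List.get_of_mem hb
  refine ⟨j + T.length - i, ?_⟩
  rw [← ha', ← hb', hiter]
  congr 1
  apply Fin.ext
  show (i + (j + T.length - i)) % T.length = j
  have h4 : i + (j + T.length - i) = j + T.length := by omega
  rw [h4]
  simp [Nat.mod_eq_of_lt hj]

/-- Euler tour list of the subtree rooted at `v`, with a fuel parameter. -/
def tourL {V : Type*} (childSeq : V → List V) : ℕ → V → List (V × Bool)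
  | 0, _ => []
  | (f+1), v => (v, false) :: ((childSeq v).flatMap (tourL childSeq f) ++ [(v, true)])

/-- In an Euler tour of a rooted ordered tree with `n ≥ 2` vertices, encoded as
the successor function on the `2(n-1)` directed edge-visits, the successor
function defines a single cycle through all `2(n-1)` edge-visits. -/
theorem eulerSucc_single_cycle {V : Type*} [Fintype V] [DecidableEq V]
    (r : V) (parent : V → V) (childSeq : V → List V)
    (hn : 2 ≤ Fintype.card V)
    (hroot : parent r = r)
    (hchild : ∀ u v : V, u ∈ childSeq v ↔ (u ≠ r ∧ parent u = v))
    (hnodup : ∀ v : V, (childSeq v).Nodup)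
    (htree : ∀ v : V, ∃ k, parent^[k] v = r) :
    (univ.filter (fun a : V × Bool => a.1 ≠ r)).card = 2 * (Fintype.card V - 1) ∧
    (∀ a ∈ univ.filter (fun a : V × Bool => a.1 ≠ r),
      eulerSucc r parent childSeq a ∈ univ.filter (fun a : V × Bool => a.1 ≠ r)) ∧
    (∀ a ∈ univ.filter (fun a : V × Bool => a.1 ≠ r),
      ∀ b ∈ univ.filter (fun a : V × Bool => a.1 ≠ r),
        ∃ k, (eulerSucc r parent childSeq)^[k] a = b) := by
  classical
  set n := Fintype.card V with hncard
  -- depth function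
  let d : V → ℕ := fun v => Nat.find (htree v)
  have hd : ∀ v, parent^[d v] v = r := fun v => Nat.find_spec (htree v)
  have hdmin : ∀ v k, k < d v → parent^[k] v ≠ r := fun v k hk => Nat.find_min (htree v) hk
  have hd_pos : ∀ v, v ≠ r → 1 ≤ d v := by
    intro v hv
    by_contra h
    have h0 : d v = 0 := by omega
    have := hd v
    rw [h0] at this
    exact hv this
  have hd_parent : ∀ v, v ≠ r → d v = d (parent v) + 1 := by
    intro v hv
    have h1 := hd_pos v hv
    have h2 : parent^[d v - 1] (parent v) = r := by
      have h := hd v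
      rw [show d v = (d v - 1) + 1 by omega] at h
      rwa [Function.iterate_succ_apply] at h
    have hle : d (parent v) ≤ d v - 1 := Nat.find_le h2
    have hge : d v ≤ d (parent v) + 1 := by
      apply Nat.find_le
      rw [Function.iterate_succ_apply]
      exact hd (parent v)
    omega
  have hd_le : ∀ v, d v ≤ n - 1 := by
    intro v
    have hinj : Function.Injective (fun i : Fin (d v + 1) => parent^[i.1] v) := by
      rintro ⟨i, hi⟩ ⟨j, hj⟩ hij
      simp only at hij
      by_contra hne
      simp only [Fin.mk.injEq] at hne
      have key : ∀ i j : ℕ, i < j → j ≤ d v → parent^[i] v = parent^[j] v → False := by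
        intro i j hij' hjd heq
        have : parent^[(d v - j) + i] v = r := by
          rw [Function.iterate_add_apply, heq, ← Function.iterate_add_apply]
          rw [show d v - j + j = d v by omega]
          exact hd v
        exact hdmin v _ (by omega) this
      rcases lt_trichotomy i j with h | h | h
      · exact key i j h (by omega) hij
      · exact hne h
      · exact key j i h (by omega) hij.symm
    have := Fintype.card_le_of_injective _ hinj
    simp only [Fintype.card_fin] at this
    omega
  have hchild_of : ∀ v, v ≠ r → (parent^[d v - 1] v ∈ childSeq r ∧ parent^[d v - 1] v ≠ r) := by
    intro v hv
    have h1 := hd_pos v hv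
    have hner : parent^[d v - 1] v ≠ r := hdmin v _ (by omega)
    have hpar : parent (parent^[d v - 1] v) = r := by
      have h := hd v
      rw [show d v = (d v - 1) + 1 by omega] at h
      rwa [Function.iterate_succ_apply'] at h
    exact ⟨(hchild _ r).mpr ⟨hner, hpar⟩, hner⟩
  -- blocks lemma
  have blocks : ∀ (g : V → List (V × Bool)) (p : V),
      (∀ c ∈ childSeq p, (g c).head? = some (c, false)) →
      (∀ c ∈ childSeq p, (g c).getLast? = some (c, true)) →
      (∀ c ∈ childSeq p, List.Chain' (fun a b => eulerSucc r parent childSeq a = b) (g c)) →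
      ∀ cs pre, childSeq p = pre ++ cs →
        List.Chain' (fun a b => eulerSucc r parent childSeq a = b) (cs.flatMap g) ∧
        (cs.flatMap g).head? = cs.head?.map (fun c => (c, false)) ∧
        (cs.flatMap g).getLast? = cs.getLast?.map (fun c => (c, true)) := by
    intro g p Hh Hl Hc cs
    induction cs with
    | nil => intro pre _; simp [List.Chain']
    | cons c cs' ih =>
      intro pre hpre
      have hcmem : c ∈ childSeq p := by rw [hpre]; simp
      obtain ⟨ih1, ih2, ih3⟩ := ih (pre ++ [c]) (by rw [hpre]; simp)
      have hcnotpre : c ∉ pre := by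
        have hnd := hnodup p
        rw [hpre] at hnd
        have := (List.nodup_append'.mp hnd).2.2
        intro hcp
        exact this hcp List.mem_cons_self
      have hparc : parent c = p := ((hchild c p).mp hcmem).2
      have hna : nextAfter (childSeq p) c = cs'.head? := by
        rw [hpre]; exact nextAfter_eq pre cs' c hcnotpre
      rw [List.flatMap_cons]
      refine ⟨?_, ?_, ?_⟩
      · rw [List.Chain', List.isChain_append]
        refine ⟨Hc c hcmem, ih1, ?_⟩
        intro x hx y hy
        rw [Hl c hcmem] at hx
        simp only [Option.mem_def, Option.some.injEq] at hx
        subst hx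
        rw [ih2] at hy
        cases cs' with
        | nil => simp at hy
        | cons c' rest' =>
          simp only [List.head?_cons, Option.map_some, Option.mem_def, Option.some.injEq] at hy
          subst hy
          simp only [eulerSucc]
          rw [hparc, hna]
          simp
      · rw [List.head?_append, Hh c hcmem]
        simp
      · rw [List.getLast?_append, ih3]
        cases cs' with
        | nil =>
          simp only [List.getLast?_nil, Option.map_none, Option.none_or]
          rw [Hl c hcmem]
          simp
        | cons c' rest' =>
          have : (c' :: rest').getLast? = some ((c' :: rest').getLast (by simp)) :=
            List.getLast?_eq_getLast (by simp)
          rw [List.getLast?_cons_cons, this]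
          simp
  -- main spec of tourL, by induction on fuel
  have tour_spec : ∀ f (v : V), v ≠ r → n ≤ f + d v →
      (tourL childSeq f v).head? = some (v, false) ∧
      (tourL childSeq f v).getLast? = some (v, true) ∧
      List.Chain' (fun a b => eulerSucc r parent childSeq a = b) (tourL childSeq f v) ∧
      (∀ (u : V) (b : Bool) (k : ℕ), parent^[k] u = v → (u, b) ∈ tourL childSeq f v) := by
    intro f
    induction f with
    | zero =>
      intro v hv hfuel
      exfalso
      have := hd_le v
      omega
    | succ f ih =>
      intro v hv hfuel
      have hch : ∀ c ∈ childSeq v, c ≠ r ∧ parent c = v := fun c hc => (hchild c v).mp hc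
      have hdc : ∀ c ∈ childSeq v, d c = d v + 1 := by
        intro c hc
        rw [hd_parent c (hch c hc).1, (hch c hc).2]
      have ihc := fun c hc => ih c (hch c hc).1 (by have := hdc c hc; omega)
      obtain ⟨hbc, hbh, hbl⟩ := blocks (tourL childSeq f) v
        (fun c hc => (ihc c hc).1) (fun c hc => (ihc c hc).2.1) (fun c hc => (ihc c hc).2.2.1)
        (childSeq v) [] rfl
      have hunfold : tourL childSeq (f+1) v
          = (v, false) :: ((childSeq v).flatMap (tourL childSeq f) ++ [(v, true)]) := rfl
      refine ⟨by rw [hunfold]; rfl, ?_, ?_, ?_⟩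
      · rw [hunfold, ← List.cons_append, List.getLast?_concat]
      · rw [hunfold, List.Chain', List.isChain_cons]
        constructor
        · intro y hy
          rw [List.head?_append, hbh] at hy
          cases hcs : childSeq v with
          | nil =>
            rw [hcs] at hy
            simp only [List.head?_nil, Option.map_none, Option.none_or, List.head?_cons,
              Option.mem_def, Option.some.injEq] at hy
            subst hy
            simp [eulerSucc, hcs]
          | cons c cs' =>
            rw [hcs] at hy
            simp only [List.head?_cons, Option.map_some, Option.mem_def] at hy
            simp at hy
            subst hy
            simp [eulerSucc, hcs]
        · rw [List.isChain_append]
          refine ⟨hbc, List.isChain_singleton _, ?_⟩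
          intro x hx y hy
          simp only [List.head?_cons, Option.mem_def, Option.some.injEq] at hy
          subst hy
          rw [hbl] at hx
          cases hcs : childSeq v with
          | nil => rw [hcs] at hx; simp at hx
          | cons c cs' =>
            rw [hcs] at hx
            have hne : c :: cs' ≠ [] := by simp
            have hgl : (c :: cs').getLast? = some ((c :: cs').getLast hne) :=
              List.getLast?_eq_getLast hne
            rw [hgl] at hx
            simp only [Option.map_some, Option.mem_def, Option.some.injEq] at hx
            subst hx
            set clast := (c :: cs').getLast hne with hclastDef
            have hclmem : clast ∈ childSeq v := by
              rw [hcs]; exact List.getLast_mem hne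
            have hparcl : parent clast = v := (hch clast hclmem).2
            have hdecomp : (c :: cs').dropLast ++ [clast] = c :: cs' :=
              List.dropLast_append_getLast hne
            have hclnot : clast ∉ (c :: cs').dropLast := by
              have hnd := hnodup v
              rw [hcs, ← hdecomp, List.nodup_append'] at hnd
              intro hcp
              exact hnd.2.2 hcp (List.mem_singleton_self _)
            have hna : nextAfter (childSeq v) clast = none := by
              rw [hcs, ← hdecomp]
              rw [nextAfter_eq _ _ _ hclnot]
              rfl
            simp only [eulerSucc]
            rw [hparcl, hna]
            simp [hv, hparcl]
      · intro u b k hk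
        cases k with
        | zero =>
          simp only [Function.iterate_zero, id_eq] at hk
          subst hk
          rw [hunfold]
          cases b <;> simp
        | succ k =>
          have hpc : parent (parent^[k] u) = v := by
            rw [Function.iterate_succ_apply'] at hk
            exact hk
          have hcner : parent^[k] u ≠ r := by
            intro h
            rw [h, hroot] at hpc
            exact hv hpc.symm
          have hcmem : parent^[k] u ∈ childSeq v := (hchild _ v).mpr ⟨hcner, hpc⟩
          have hmem : (u, b) ∈ tourL childSeq f (parent^[k] u) :=
            (ihc _ hcmem).2.2.2 u b k rfl
          rw [hunfold]
          simp only [List.mem_cons, List.mem_append, List.mem_flatMap]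
          exact Or.inr (Or.inl ⟨_, hcmem, hmem⟩)
  -- the global tour
  obtain ⟨v₀, hv₀⟩ := Fintype.exists_ne_of_one_lt_card (by omega) r
  have hcr_ne : childSeq r ≠ [] := by
    intro h
    have := (hchild_of v₀ hv₀).1
    rw [h] at this
    simp at this
  set T := (childSeq r).flatMap (tourL childSeq n) with hTdef
  have hchr : ∀ c ∈ childSeq r, c ≠ r ∧ parent c = r := fun c hc => (hchild c r).mp hc
  have specr := fun c (hc : c ∈ childSeq r) =>
    tour_spec n c (hchr c hc).1 (by omega)
  obtain ⟨hTc, hTh, hTl⟩ := blocks (tourL childSeq n) r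
    (fun c hc => (specr c hc).1) (fun c hc => (specr c hc).2.1) (fun c hc => (specr c hc).2.2.1)
    (childSeq r) [] rfl
  have hTmem : ∀ (u : V) (b : Bool), u ≠ r → (u, b) ∈ T := by
    intro u b hu
    obtain ⟨hcm, hcner⟩ := hchild_of u hu
    rw [hTdef, List.mem_flatMap]
    exact ⟨_, hcm, (tour_spec n _ hcner (by omega)).2.2.2 u b (d u - 1) rfl⟩
  have hwrap : ∀ x ∈ T.getLast?, ∀ y ∈ T.head?, eulerSucc r parent childSeq x = y := by
    intro x hx y hy
    rw [hTl] at hx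
    rw [hTh] at hy
    cases hcs : childSeq r with
    | nil => exact absurd hcs hcr_ne
    | cons c cs' =>
      rw [hcs] at hx hy
      simp only [List.head?_cons, Option.map_some, Option.mem_def, Option.some.injEq] at hy
      subst hy
      have hne : c :: cs' ≠ [] := by simp
      have hgl : (c :: cs').getLast? = some ((c :: cs').getLast hne) :=
        List.getLast?_eq_getLast hne
      rw [hgl] at hx
      simp only [Option.map_some, Option.mem_def, Option.some.injEq] at hx
      subst hx
      set clast := (c :: cs').getLast hne with hclastDef
      have hclmem : clast ∈ childSeq r := by
        rw [hcs]; exact List.getLast_mem hne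
      have hparcl : parent clast = r := (hchr clast hclmem).2
      have hdecomp : (c :: cs').dropLast ++ [clast] = c :: cs' :=
        List.dropLast_append_getLast hne
      have hclnot : clast ∉ (c :: cs').dropLast := by
        have hnd := hnodup r
        rw [hcs, ← hdecomp, List.nodup_append'] at hnd
        intro hcp
        exact hnd.2.2 hcp (List.mem_singleton_self _)
      have hna : nextAfter (childSeq r) clast = none := by
        rw [hcs, ← hdecomp, nextAfter_eq _ _ _ hclnot]
        rfl
      simp only [eulerSucc]
      rw [hparcl, hna]
      simp [hcs]
  refine ⟨?_, ?_, ?_⟩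
  · have hset : (univ.filter (fun a : V × Bool => a.1 ≠ r))
        = (univ.filter (fun v : V => v ≠ r)) ×ˢ (univ : Finset Bool) := by
      ext ⟨v, b⟩
      simp
    rw [hset, Finset.card_product, Finset.filter_ne', Finset.card_erase_of_mem (mem_univ r)]
    simp only [Finset.card_univ, Fintype.card_bool]
    rw [mul_comm]
  · rintro ⟨v, b⟩ hmem
    simp only [Finset.mem_filter, Finset.mem_univ, true_and] at hmem ⊢
    cases b with
    | false =>
      cases hcs : childSeq v with
      | nil => simpa [eulerSucc, hcs] using hmem
      | cons c cs' =>
        have : c ∈ childSeq v := by rw [hcs]; simp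
        simpa [eulerSucc, hcs] using ((hchild c v).mp this).1
    | true =>
      cases hna : nextAfter (childSeq (parent v)) v with
      | some w =>
        have hw : w ∈ childSeq (parent v) := nextAfter_mem hna
        have : eulerSucc r parent childSeq (v, true) = (w, false) := by
          simp only [eulerSucc]; rw [hna]
        rw [this]
        exact ((hchild w (parent v)).mp hw).1
      | none =>
        by_cases hpr : parent v = r
        · cases hcs : childSeq r with
          | nil =>
            have : eulerSucc r parent childSeq (v, true) = (v, true) := by
              simp only [eulerSucc]; rw [hna]; simp [hpr, hcs]
            rw [this]; exact hmem
          | cons c cs' =>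
            have hcmem : c ∈ childSeq r := by rw [hcs]; simp
            have : eulerSucc r parent childSeq (v, true) = (c, false) := by
              simp only [eulerSucc]; rw [hna]; simp [hpr, hcs]
            rw [this]
            exact ((hchild c r).mp hcmem).1
        · have : eulerSucc r parent childSeq (v, true) = (parent v, true) := by
            simp only [eulerSucc]; rw [hna]; simp [hpr]
          rw [this]
          exact hpr
  · rintro ⟨u, b⟩ hu ⟨u', b'⟩ hu'
    simp only [Finset.mem_filter, Finset.mem_univ, true_and] at hu hu'
    exact cycle_of_list _ T hTc hwrap _ (hTmem u b hu) _ (hTmem u' b' hu')
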